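/- For the Hamiltonian H = (px²+py²+pz²)/2 + k1(x²+y²+4z²) + k2/x² + k3/y² (the 1:1:2 oscillator with two centrifugal terms), the Runge–Lenz type function K_RL1 = −px·(z·px − x·pz) + 2k1 x² z − 2k2 z/x² satisfies {K_RL1, H} = 0. -/

import Mathlib

noncomputable section

/-- Phase space ℝ⁶ with coordinates (x,y,z,px,py,pz). -/
abbrev Pt := Fin 6 → ℝ

/-- Standard basis vector. -/
def e (j : Fin 6) : Pt := Pi.single j 1

/-- Canonical Poisson bracket on ℝ⁶:
{F,G} = Σᵢ (∂F/∂qᵢ ∂G/∂pᵢ − ∂F/∂pᵢ ∂G/∂qᵢ). -/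
def pb (F G : Pt → ℝ) (q : Pt) : ℝ :=
    (fderiv ℝ F q (e 0)) * (fderiv ℝ G q (e 3)) - (fderiv ℝ F q (e 3)) * (fderiv ℝ G q (e 0))
  + (fderiv ℝ F q (e 1)) * (fderiv ℝ G q (e 4)) - (fderiv ℝ F q (e 4)) * (fderiv ℝ G q (e 1))
  + (fderiv ℝ F q (e 2)) * (fderiv ℝ G q (e 5)) - (fderiv ℝ F q (e 5)) * (fderiv ℝ G q (e 2))

/-- H = (px²+py²+pz²)/2 + k1(x²+y²+4z²) + k2/x² + k3/y². -/
def Ham (k1 k2 k3 : ℝ) (q : Pt) : ℝ :=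
  (q 3 ^ 2 + q 4 ^ 2 + q 5 ^ 2) / 2 + k1 * (q 0 ^ 2 + q 1 ^ 2 + 4 * q 2 ^ 2)
    + k2 / q 0 ^ 2 + k3 / q 1 ^ 2

/-- K_RL1 = −px·(z px − x pz) + 2k1 x² z − 2k2 z/x². -/
def KRL1 (k1 k2 : ℝ) (q : Pt) : ℝ :=
  -(q 3 * (q 2 * q 3 - q 0 * q 5)) + 2 * k1 * q 0 ^ 2 * q 2 - 2 * k2 * q 2 / q 0 ^ 2

def P (i : Fin 6) : Pt →L[ℝ] ℝ := ContinuousLinearMap.proj i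
lemma hP (i : Fin 6) (q : Pt) : HasFDerivAt (fun p : Pt => p i) (P i) q :=
  hasFDerivAt_apply (𝕜 := ℝ) (F' := fun _ : Fin 6 => ℝ) i q

set_option maxHeartbeats 2000000 in
theorem stmt7 (k1 k2 k3 : ℝ) :
    ∀ q : Pt, q 0 ≠ 0 → q 1 ≠ 0 →
      pb (KRL1 k1 k2) (Ham k1 k2 k3) q = 0 := by
  intro q h0 h1
  have hHeq : Ham k1 k2 k3 = fun p : Pt =>
      (1/2 : ℝ) * (p 3 * p 3 + p 4 * p 4 + p 5 * p 5)
        + k1 * (p 0 * p 0 + (p 1 * p 1 + 4 * (p 2 * p 2)))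
        + (k2 * (p 0 * p 0)⁻¹ + k3 * (p 1 * p 1)⁻¹) := by
    funext p; simp only [Ham]; field_simp; ring
  have hKeq : KRL1 k1 k2 = fun p : Pt =>
      -(p 3 * (p 2 * p 3 - p 0 * p 5)) + 2 * k1 * (p 0 * p 0) * p 2
        - k2 * (2 * p 2) * (p 0 * p 0)⁻¹ := by
    funext p; simp only [KRL1]; field_simp
  have hsq : ∀ i : Fin 6, HasFDerivAt (fun p : Pt => p i * p i) (q i • P i + q i • P i) q :=
    fun i => (hP i q).mul (hP i q)
  have hinv0 : HasFDerivAt (fun p : Pt => (p 0 * p 0)⁻¹)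
      ((ContinuousLinearMap.smulRight (1 : ℝ →L[ℝ] ℝ) (-((q 0 * q 0) ^ 2)⁻¹)).comp
        (q 0 • P 0 + q 0 • P 0)) q :=
    HasFDerivAt.comp q (hasDerivAt_inv (mul_ne_zero h0 h0)).hasFDerivAt (hsq 0)
  have hinv1 : HasFDerivAt (fun p : Pt => (p 1 * p 1)⁻¹)
      ((ContinuousLinearMap.smulRight (1 : ℝ →L[ℝ] ℝ) (-((q 1 * q 1) ^ 2)⁻¹)).comp
        (q 1 • P 1 + q 1 • P 1)) q :=
    HasFDerivAt.comp q (hasDerivAt_inv (mul_ne_zero h1 h1)).hasFDerivAt (hsq 1)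
  have hH := (((((hsq 3).add (hsq 4)).add (hsq 5)).const_mul (1/2 : ℝ)).add
      (((hsq 0).add ((hsq 1).add ((hsq 2).const_mul 4))).const_mul k1)).add
      ((hinv0.const_mul k2).add (hinv1.const_mul k3))
  have hK := (((hP 3 q).mul (((hP 2 q).mul (hP 3 q)).sub ((hP 0 q).mul (hP 5 q)))).neg.add
      (((hsq 0).const_mul (2 * k1)).mul (hP 2 q))).sub
      ((((hP 2 q).const_mul 2).const_mul k2).mul hinv0)
  rw [hHeq, hKeq]
  simp only [Pi.add_def, Pi.mul_def, Pi.sub_def, Pi.neg_def] at hH hK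
  rw [pb, hH.fderiv, hK.fderiv]
  have he : ∀ j i : Fin 6, e j i = if i = j then 1 else 0 := by
    intro j i; simp [e, Pi.single_apply]
  simp only [ContinuousLinearMap.add_apply, ContinuousLinearMap.sub_apply,
    ContinuousLinearMap.neg_apply, ContinuousLinearMap.smul_apply,
    ContinuousLinearMap.comp_apply, ContinuousLinearMap.smulRight_apply,
    ContinuousLinearMap.one_apply, P, ContinuousLinearMap.proj_apply,
    he, smul_eq_mul, Fin.reduceEq, if_true, if_false, reduceIte]
  norm_num
  field_simp
  ring
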